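/- For every Laver tree T ⊆ ω^{<ω} and every Borel function f : [T] → 2^ω there is a Laver tree S ⊆ T such that f restricted to [S] is continuous. -/

import Mathlib

open Set

/-- The initial segment `r ↾ n` of a point of Baire space, as a finite sequence. -/
def seqTake (r : ℕ → ℕ) (n : ℕ) : List ℕ := List.ofFn fun i : Fin n => r i

/-- `[T]`, the set of infinite branches of a tree `T ⊆ ω^{<ω}`. -/
def branches (T : Set (List ℕ)) : Set (ℕ → ℕ) := {r | ∀ n, seqTake r n ∈ T}

/-- `T` is a Laver tree with stem `s`: `T` is closed under initial segments, `s ∈ T` is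
comparable with every element of `T`, and every `t ∈ T` extending `s` has infinitely many
immediate successors in `T`. -/
def IsLaverTreeWithStem (T : Set (List ℕ)) (s : List ℕ) : Prop :=
  s ∈ T ∧ (∀ t ∈ T, ∀ u : List ℕ, u <+: t → u ∈ T) ∧
    (∀ t ∈ T, t <+: s ∨ s <+: t) ∧
    (∀ t ∈ T, s <+: t → {n : ℕ | t ++ [n] ∈ T}.Infinite)

/-- A Laver tree: a (nonempty) tree `T ⊆ ω^{<ω}` with a stem. -/
def IsLaverTree (T : Set (List ℕ)) : Prop := ∃ s, IsLaverTreeWithStem T s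

namespace LaverCRN

abbrev Node := List ℕ

theorem seqTake_succ (r : ℕ → ℕ) (n : ℕ) : seqTake r (n+1) = seqTake r n ++ [r n] := by
  rw [seqTake, List.ofFn_succ']
  simp [seqTake, List.concat_eq_append, Fin.castSucc]

@[simp] theorem seqTake_length (r : ℕ → ℕ) (n : ℕ) : (seqTake r n).length = n := by simp [seqTake]

theorem seqTake_prefix (r : ℕ → ℕ) {m n : ℕ} (h : m ≤ n) : seqTake r m <+: seqTake r n := by
  induction n with
  | zero => simp at h; simp [h]
  | succ k ih =>
    rcases Nat.lt_or_ge m (k+1) with h' | h'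
    · exact (ih (Nat.lt_succ_iff.mp h')).trans (by rw [seqTake_succ]; exact List.prefix_append _ _)
    · have : m = k + 1 := le_antisymm h h'
      simp [this]

/-- `t` is an initial segment of the branch `r`. -/
def Lext (t : Node) (r : ℕ → ℕ) : Prop := seqTake r t.length = t

theorem lext_seqTake (r : ℕ → ℕ) (n : ℕ) : Lext (seqTake r n) r := by
  simp [Lext]

theorem Lext.comparable {t u : Node} {r : ℕ → ℕ} (ht : Lext t r) (hu : Lext u r) :
    t <+: u ∨ u <+: t := by
  rcases Nat.le_or_le t.length u.length with h | h
  · left; rw [← ht, ← hu]; exact seqTake_prefix r h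
  · right; rw [← ht, ← hu]; exact seqTake_prefix r h

theorem Lext.of_prefix {t u : Node} {r : ℕ → ℕ} (hu : u <+: t) (ht : Lext t r) : Lext u r := by
  have h1 : seqTake r u.length <+: seqTake r t.length := seqTake_prefix r hu.length_le
  rw [ht] at h1
  rcases List.prefix_or_prefix_of_prefix h1 hu with h | h
  · exact h.eq_of_length_le (by simp)
  · exact (h.eq_of_length_le (by simp)).symm

theorem lext_append_iff {t : Node} {n : ℕ} {r : ℕ → ℕ} :
    Lext (t ++ [n]) r ↔ Lext t r ∧ r t.length = n := by
  unfold Lext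
  rw [List.length_append, List.length_singleton, seqTake_succ]
  constructor
  · intro h
    have h1 := congrArg (List.take t.length) h
    rw [List.take_append_of_le_length (by simp), List.take_append_of_le_length (le_refl _),
      List.take_of_length_le (by simp), List.take_of_length_le (le_refl _)] at h1
    have h2 := congrArg (fun l => l.getLast?) h
    simp [List.getLast?_append] at h2
    exact ⟨h1, h2⟩
  · rintro ⟨h1, h2⟩; rw [h1, h2]

theorem mem_of_lext {S : Set Node} {r : ℕ → ℕ} {t : Node} (hr : r ∈ branches S)
    (ht : Lext t r) : t ∈ S := by
  rw [← ht]; exact hr _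

theorem branches_mono {S T : Set Node} (h : S ⊆ T) : branches S ⊆ branches T :=
  fun _ hr n => h (hr n)

/-- restriction of a tree to nodes comparable with `t` -/
def res (S : Set Node) (t : Node) : Set Node := {u | u ∈ S ∧ (u <+: t ∨ t <+: u)}

theorem res_subset (S : Set Node) (t : Node) : res S t ⊆ S := fun _ h => h.1

theorem res_mono {S S' : Set Node} (h : S ⊆ S') (t : Node) : res S t ⊆ res S' t :=
  fun _ hu => ⟨h hu.1, hu.2⟩

theorem res_laver {S : Set Node} {s t : Node} (h : IsLaverTreeWithStem S s)
    (ht : t ∈ S) (hst : s <+: t) : IsLaverTreeWithStem (res S t) t := by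
  obtain ⟨hs, hcl, hcomp, hsplit⟩ := h
  refine ⟨⟨ht, Or.inl (List.prefix_refl t)⟩, ?_, fun u hu => hu.2, ?_⟩
  · rintro u ⟨hu, hc⟩ w hw
    refine ⟨hcl u hu w hw, ?_⟩
    rcases hc with hc | hc
    · exact Or.inl (hw.trans hc)
    · exact List.prefix_or_prefix_of_prefix hw (hc.trans (List.prefix_rfl)) |>.imp id id
      |>.elim (fun h' => Or.inl h') (fun h' => Or.inr h') |>.imp id id
  · rintro u ⟨hu, hc⟩ htu
    have h1 : {n : ℕ | u ++ [n] ∈ S}.Infinite := hsplit u hu (hst.trans htu)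
    refine h1.mono ?_
    intro n hn
    exact ⟨hn, Or.inr (htu.trans (List.prefix_append _ _))⟩

theorem branches_res {S : Set Node} {t : Node} {r : ℕ → ℕ} :
    r ∈ branches (res S t) ↔ r ∈ branches S ∧ Lext t r := by
  constructor
  · intro h
    refine ⟨fun n => (h n).1, ?_⟩
    have h1 := (h t.length).2
    rcases h1 with h1 | h1
    · exact h1.eq_of_length_le (by simp)
    · exact (h1.eq_of_length_le (by simp)).symm
  · rintro ⟨hr, ht⟩ n
    refine ⟨hr n, ?_⟩
    have := (lext_seqTake r n).comparable ht
    tauto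

theorem branches_res_of_lext {S : Set Node} {t : Node} {r : ℕ → ℕ}
    (hr : r ∈ branches S) (ht : Lext t r) : r ∈ branches (res S t) :=
  branches_res.mpr ⟨hr, ht⟩

theorem stem_prefix_of_long {S : Set Node} {s t : Node} (h : IsLaverTreeWithStem S s)
    (ht : t ∈ S) (hl : s.length ≤ t.length) : s <+: t := by
  rcases h.2.2.1 t ht with h' | h'
  · exact (h'.eq_of_length_le hl) ▸ List.prefix_refl _
  · exact h'

theorem long_node {S : Set Node} {s : Node} (h : IsLaverTreeWithStem S s) (m : ℕ) :
    ∃ u ∈ S, s <+: u ∧ m ≤ u.length := by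
  induction m with
  | zero => exact ⟨s, h.1, List.prefix_refl _, Nat.zero_le _⟩
  | succ k ih =>
    obtain ⟨u, hu, hsu, hk⟩ := ih
    obtain ⟨n, hn⟩ := (h.2.2.2 u hu hsu).nonempty
    exact ⟨u ++ [n], hn, hsu.trans (List.prefix_append _ _), by simp; omega⟩

/-- strict prefix -/
def SPre (u v : Node) : Prop := u <+: v ∧ u ≠ v

theorem SPre.length_lt {u v : Node} (h : SPre u v) : u.length < v.length := by
  rcases Nat.lt_or_ge u.length v.length with h' | h'
  · exact h'
  · exact absurd (h.1.eq_of_length_le h') h.2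

/-- `D` is open: closed under passing to Laver subtrees. -/
def DOpen (D : Set (Set Node)) : Prop :=
  ∀ U V : Set Node, U ∈ D → V ⊆ U → IsLaverTree V → V ∈ D

/-- `D` is dense below `T`. -/
def DenseBelow (D : Set (Set Node)) (T : Set Node) : Prop :=
  ∀ V, IsLaverTree V → V ⊆ T → ∃ W, IsLaverTree W ∧ W ⊆ V ∧ W ∈ D

theorem DenseBelow.mono {D : Set (Set Node)} {T U : Set Node} (h : DenseBelow D T)
    (hUT : U ⊆ T) : DenseBelow D U := fun V hV hVU => h V hV (hVU.trans hUT)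

/-- From a hitting property along every branch extract an antichain front. -/
theorem extract_front {S : Set Node} (Q : Node → Prop)
    (hQ : ∀ r ∈ branches S, ∃ u, Lext u r ∧ Q u) :
    ∃ A : Set Node, (∀ v ∈ A, Q v) ∧ (∀ v ∈ A, ∀ v' ∈ A, v <+: v' → v = v') ∧
      (∀ r ∈ branches S, ∃ v ∈ A, Lext v r) := by
  refine ⟨{u | Q u ∧ ∀ w, SPre w u → ¬ Q w}, fun v hv => hv.1, ?_, ?_⟩
  · intro v hv v' hv' hvv'
    by_contra hne
    exact hv'.2 v ⟨hvv', hne⟩ hv.1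
  · intro r hr
    obtain ⟨u, hu, hQu⟩ := hQ r hr
    have hex : ∃ n, Q (seqTake r n) := ⟨u.length, by rwa [hu]⟩
    classical
    let m := Nat.find hex
    refine ⟨seqTake r m, ⟨Nat.find_spec hex, ?_⟩, lext_seqTake r m⟩
    intro w hw hQw
    have hlw : Lext w r := Lext.of_prefix hw.1 (lext_seqTake r m)
    have hlen : w.length < m := by
      have := hw.length_lt; simpa using this
    have := Nat.find_min hex hlen
    rw [hlw] at this
    exact this hQw

theorem prefix_snoc {w u : Node} {n : ℕ} (h : w <+: u ++ [n]) : w <+: u ∨ w = u ++ [n] := by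
  rcases le_or_gt w.length u.length with hl | hl
  · rcases List.prefix_or_prefix_of_prefix h (List.prefix_append u [n]) with h' | h'
    · exact Or.inl h'
    · exact Or.inl ((h'.eq_of_length_le hl) ▸ List.prefix_refl _)
  · right
    refine h.eq_of_length_le ?_
    simp; omega

/-- Rank predicate: from `t` one can reach members of `D`. -/
inductive Reach (T : Set Node) (D : Set (Set Node)) : Node → Prop
  | base (t : Node) (U : Set Node) (hU : IsLaverTreeWithStem U t) (hsub : U ⊆ T)
      (hD : U ∈ D) : Reach T D t
  | step (t : Node) (I : Set ℕ) (hI : I.Infinite) (hmem : ∀ n ∈ I, t ++ [n] ∈ T)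
      (h : ∀ n ∈ I, Reach T D (t ++ [n])) : Reach T D t

theorem reach_all {T : Set Node} {s : Node} (hT : IsLaverTreeWithStem T s)
    {D : Set (Set Node)} (hDo : DOpen D) (hden : DenseBelow D T)
    {t : Node} (ht : t ∈ T) (hst : s <+: t) : Reach T D t := by
  by_contra hR
  set V : Set Node :=
    {u | u ∈ T ∧ (u <+: t ∨ (t <+: u ∧ ∀ w, t <+: w → w <+: u → ¬ Reach T D w))} with hVdef
  have hVsub : V ⊆ T := fun u hu => hu.1
  -- every element of V above t is non-reaching, with full path condition
  have hpathV : ∀ u ∈ V, t <+: u → ∀ w, t <+: w → w <+: u → ¬ Reach T D w := by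
    rintro u ⟨huT, hc⟩ htu w htw hwu
    rcases hc with hc | hc
    · have hut : u = t := hc.eq_of_length_le htu.length_le
      have hwt : w = t := by
        rw [hut] at hwu
        exact hwu.eq_of_length_le htw.length_le
      rw [hwt]
      exact hR
    · exact hc.2 w htw hwu
  have hV : IsLaverTreeWithStem V t := by
    refine ⟨⟨ht, Or.inr ⟨List.prefix_refl t, ?_⟩⟩, ?_, fun u hu => ?_, ?_⟩
    · intro w htw hwt h
      have : w = t := hwt.eq_of_length_le htw.length_le
      exact hR (this ▸ h)
    · rintro u ⟨huT, hc⟩ w hwu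
      refine ⟨hT.2.1 u huT w hwu, ?_⟩
      rcases hc with hc | hc
      · exact Or.inl (hwu.trans hc)
      · rcases List.prefix_or_prefix_of_prefix hwu hc.1 with h' | h'
        · exact Or.inl h'
        · exact Or.inr ⟨h', fun w' h1 h2 => hc.2 w' h1 (h2.trans hwu)⟩
    · rcases hu.2 with hc | hc
      · exact Or.inl hc
      · exact Or.inr hc.1
    · rintro u huV htu
      have huT : u ∈ T := huV.1
      have hnr : ¬ Reach T D u := hpathV u huV htu u htu (List.prefix_refl u)
      have hfin : {n : ℕ | u ++ [n] ∈ T ∧ Reach T D (u ++ [n])}.Finite := by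
        by_contra hinf
        exact hnr (Reach.step u {n : ℕ | u ++ [n] ∈ T ∧ Reach T D (u ++ [n])} hinf
          (fun n hn => hn.1) (fun n hn => hn.2))
      have hbig : {n : ℕ | u ++ [n] ∈ T}.Infinite :=
        hT.2.2.2 u huT (hst.trans htu)
      refine ((hbig.diff hfin).mono ?_)
      rintro n ⟨hnT, hnR⟩
      have hnr' : ¬ Reach T D (u ++ [n]) := fun h => hnR ⟨hnT, h⟩
      refine ⟨hnT, Or.inr ⟨htu.trans (List.prefix_append _ _), ?_⟩⟩
      intro w htw hwu
      rcases prefix_snoc hwu with h' | h'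
      · exact hpathV u huV htu w htw h'
      · rw [h']
        exact hnr'
  obtain ⟨W, ⟨s', hW⟩, hWV, hWD⟩ := hden V ⟨t, hV⟩ hVsub
  obtain ⟨u, huW, hsu, hul⟩ := long_node hW t.length
  have huV : u ∈ V := hWV huW
  have htu : t <+: u := by
    rcases huV.2 with hc | hc
    · exact (hc.eq_of_length_le hul) ▸ List.prefix_refl _
    · exact hc.1
  have hRu : Reach T D u :=
    Reach.base u (res W u) (res_laver hW huW hsu)
      ((res_subset W u).trans (hWV.trans hVsub))
      (hDo W (res W u) hWD (res_subset W u) ⟨u, res_laver hW huW hsu⟩)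
  exact hpathV u huV htu u htu (List.prefix_refl u) hRu

theorem append_inj_right {t : Node} {n n' : ℕ} (h : t ++ [n] = t ++ [n']) : n = n' := by
  have := List.append_cancel_left h
  simpa using this

theorem front_of_reach {T : Set Node} {s : Node} (hT : IsLaverTreeWithStem T s)
    {D : Set (Set Node)} (hDo : DOpen D) :
    ∀ t : Node, Reach T D t → s <+: t → t ∈ T →
      ∃ S : Set Node, IsLaverTreeWithStem S t ∧ S ⊆ res T t ∧
        ∀ r ∈ branches S, ∃ u, Lext u r ∧ t <+: u ∧ res S u ∈ D := by
  intro t' hR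
  induction hR with
  | base t U hU hsub hD =>
    intro hst htT
    refine ⟨U, hU, fun u hu => ⟨hsub hu, hU.2.2.1 u hu⟩, ?_⟩
    intro r hr
    have hlt : Lext t r := by
      have h1 := hr t.length
      rcases hU.2.2.1 _ h1 with h | h
      · exact h.eq_of_length_le (by simp)
      · exact (h.eq_of_length_le (by simp)).symm
    exact ⟨t, hlt, List.prefix_refl t,
      hDo U (res U t) hD (res_subset U t) ⟨t, res_laver hU hU.1 (List.prefix_refl t)⟩⟩
  | step t I hI hmem hRn ih =>
    intro hst htT
    choose SF h1 h2 h3 using fun (n : ℕ) (hn : n ∈ I) =>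
      ih n hn (hst.trans (List.prefix_append t [n])) (hmem n hn)
    set S : Set Node := {u | ∃ n, ∃ hn : n ∈ I, u ∈ SF n hn} with hSdef
    have claimA : ∀ u ∈ S, u <+: t ∨ ∃ n, ∃ hn : n ∈ I, (t ++ [n]) <+: u ∧ u ∈ SF n hn := by
      rintro u ⟨n, hn, hu⟩
      rcases (h1 n hn).2.2.1 u hu with h | h
      · rcases prefix_snoc h with h' | h'
        · exact Or.inl h'
        · exact Or.inr ⟨n, hn, h' ▸ List.prefix_refl _, hu⟩
      · exact Or.inr ⟨n, hn, h, hu⟩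
    have claimB : ∀ w : Node, w <+: t → w ∈ S := by
      intro w hw
      obtain ⟨n₀, hn₀⟩ := hI.nonempty
      exact ⟨n₀, hn₀, (h1 n₀ hn₀).2.1 _ (h1 n₀ hn₀).1 w (hw.trans (List.prefix_append t [n₀]))⟩
    have hcompS : ∀ u ∈ S, u <+: t ∨ t <+: u := by
      intro u hu
      rcases claimA u hu with h | ⟨n, hn, h, _⟩
      · exact Or.inl h
      · exact Or.inr ((List.prefix_append t [n]).trans h)
    have hS : IsLaverTreeWithStem S t := by
      refine ⟨claimB t (List.prefix_refl t), ?_, hcompS, ?_⟩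
      · rintro u ⟨n, hn, hu⟩ w hw
        exact ⟨n, hn, (h1 n hn).2.1 u hu w hw⟩
      · intro u hu htu
        rcases claimA u hu with h | ⟨n, hn, h, humem⟩
        · have hut : u = t := h.eq_of_length_le htu.length_le
          subst hut
          refine hI.mono ?_
          intro m hm
          exact ⟨m, hm, (h1 m hm).1⟩
        · refine ((h1 n hn).2.2.2 u humem h).mono ?_
          intro m hm
          exact ⟨n, hn, hm⟩
    have hsubS : S ⊆ res T t := by
      intro u hu
      obtain ⟨n, hn, hu'⟩ := id hu
      exact ⟨(h2 n hn hu').1, hcompS u hu⟩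
    refine ⟨S, hS, hsubS, ?_⟩
    intro r hr
    have hu1 : seqTake r (t.length + 1) ∈ S := hr _
    rcases claimA _ hu1 with h | ⟨n, hn, hpre, humem⟩
    · exact absurd h.length_le (by simp)
    have e : seqTake r (t.length + 1) = t ++ [n] :=
      (hpre.eq_of_length_le (by simp)).symm
    have hltn : Lext (t ++ [n]) r := by
      show seqTake r (t ++ [n]).length = t ++ [n]
      rw [List.length_append, List.length_singleton]
      exact e
    have hlt : Lext t r := (lext_append_iff.mp hltn).1
    have hrn : r t.length = n := (lext_append_iff.mp hltn).2
    -- any deep node of S along or beside r above t++[n'] forces n' = n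
    have claimC : ∀ w : Node, Lext w r → ∀ n' : ℕ, (t ++ [n']) <+: w → n' = n := by
      intro w hw n' hp
      have : Lext (t ++ [n']) r := Lext.of_prefix hp hw
      have := (lext_append_iff.mp this).2
      omega
    have hrbr : r ∈ branches (SF n hn) := by
      intro m
      rcases le_or_gt m (t.length + 1) with hm | hm
      · have hpm : seqTake r m <+: t ++ [n] := by
          rw [← e]; exact seqTake_prefix r hm
        have hmemSF : (t ++ [n]) ∈ SF n hn := by rw [← e]; exact humem
        exact (h1 n hn).2.1 _ hmemSF _ hpm
      · have hin : seqTake r m ∈ S := hr m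
        rcases claimA _ hin with h | ⟨n', hn', hp', hmem'⟩
        · exact absurd h.length_le (by simp; omega)
        · have : n' = n := claimC _ (lext_seqTake r m) n' hp'
          subst this
          exact hmem'
    obtain ⟨u, hlu, hpu, hres⟩ := h3 n hn r hrbr
    have humemS : u ∈ S := ⟨n, hn, mem_of_lext hrbr hlu⟩
    have htu : t <+: u := (List.prefix_append t [n]).trans hpu
    refine ⟨u, hlu, htu, ?_⟩
    refine hDo _ (res S u) hres ?_ ⟨u, res_laver hS humemS htu⟩
    rintro w ⟨hwS, hwc⟩
    refine ⟨?_, hwc⟩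
    rcases claimA w hwS with h | ⟨n'', hn'', hp'', hm''⟩
    · exact (h1 n hn).2.1 _ (h1 n hn).1 w (h.trans (List.prefix_append t [n]))
    · have : n'' = n := by
        rcases hwc with hwu | huw
        · exact claimC w (Lext.of_prefix hwu hlu) n'' hp''
        · have h5 : (t ++ [n]) <+: w := hpu.trans huw
          rcases List.prefix_or_prefix_of_prefix h5 hp'' with h6 | h6
          · exact (append_inj_right (h6.eq_of_length_le (by simp))).symm
          · exact append_inj_right (h6.eq_of_length_le (by simp))
      subst this
      exact hm''

theorem front {T : Set Node} {s : Node} (hT : IsLaverTreeWithStem T s)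
    {D : Set (Set Node)} (hDo : DOpen D) (hden : DenseBelow D T) :
    ∃ S : Set Node, IsLaverTreeWithStem S s ∧ S ⊆ T ∧
      ∀ r ∈ branches S, ∃ u, Lext u r ∧ s <+: u ∧ res S u ∈ D := by
  obtain ⟨S, hS, hsub, hfr⟩ := front_of_reach hT hDo s
    (reach_all hT hDo hden hT.1 (List.prefix_refl s)) (List.prefix_refl s) hT.1
  exact ⟨S, hS, hsub.trans (res_subset T s), hfr⟩

/-- Invariants carried through the fusion. -/
structure Stage (T : Set Node) (s : Node) (k : ℕ) (S A : Set Node) : Prop where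
  laver : IsLaverTreeWithStem S s
  sub : S ⊆ T
  frontQ : ∀ v ∈ A, v ∈ S ∧ s <+: v ∧ s.length + k ≤ v.length
  anti : ∀ v ∈ A, ∀ v' ∈ A, v <+: v' → v = v'
  hit : ∀ r ∈ branches S, ∃ v ∈ A, Lext v r

theorem fusion_step {T : Set Node} {s : Node} {D : Set (Set Node)} {k : ℕ} {S A : Set Node}
    (hst : Stage T s k S A) (hDo : DOpen D) (hden : DenseBelow D T) :
    ∃ S' A' : Set Node, Stage T s (k+1) S' A' ∧ S' ⊆ S ∧
      (∀ u, (∀ v ∈ A, ¬ SPre v u) → (u ∈ S' ↔ u ∈ S)) ∧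
      (∀ r ∈ branches S', ∃ u, Lext u r ∧ s <+: u ∧ res S' u ∈ D) := by
  classical
  have hchoice : ∀ (v : Node) (n : ℕ), v ∈ A → v ++ [n] ∈ S →
      ∃ Wt : Set Node, IsLaverTreeWithStem Wt (v ++ [n]) ∧ Wt ⊆ res S (v ++ [n]) ∧
        ∀ r ∈ branches Wt, ∃ u, Lext u r ∧ (v ++ [n]) <+: u ∧ res Wt u ∈ D := by
    intro v n hv hn
    exact front (res_laver hst.laver hn
        (((hst.frontQ v hv).2.1).trans (List.prefix_append v [n])))
      hDo (hden.mono ((res_subset S _).trans hst.sub))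
  choose W hW1 hW2 hW3 using hchoice
  set S' : Set Node := {u | (u ∈ S ∧ ∀ v ∈ A, ¬ SPre v u) ∨
    ∃ v n, ∃ (hv : v ∈ A) (hn : v ++ [n] ∈ S), (v ++ [n]) <+: u ∧ u ∈ W v n hv hn}
    with hS'def
  have hsubS : S' ⊆ S := by
    rintro u (⟨h, _⟩ | ⟨v, n, hv, hn, _, hm⟩)
    · exact h
    · exact (hW2 v n hv hn hm).1
  have uniq : ∀ (u v v' : Node) (n n' : ℕ), v ∈ A → v' ∈ A →
      (v ++ [n]) <+: u → (v' ++ [n']) <+: u → v = v' ∧ n = n' := by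
    intro u v v' n n' hv hv' h h'
    have hvu : v <+: u := (List.prefix_append v [n]).trans h
    have hvu' : v' <+: u := (List.prefix_append v' [n']).trans h'
    have hvv : v = v' := by
      rcases List.prefix_or_prefix_of_prefix hvu hvu' with hc | hc
      · exact hst.anti v hv v' hv' hc
      · exact (hst.anti v' hv' v hv hc).symm
    subst hvv
    refine ⟨rfl, ?_⟩
    rcases List.prefix_or_prefix_of_prefix h h' with hc | hc
    · exact append_inj_right (hc.eq_of_length_le (by simp))
    · exact (append_inj_right (hc.eq_of_length_le (by simp))).symm
  have hstab : ∀ u, (∀ v ∈ A, ¬ SPre v u) → (u ∈ S' ↔ u ∈ S) := by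
    intro u hno
    constructor
    · exact fun h => hsubS h
    · intro h; exact Or.inl ⟨h, hno⟩
  have hS' : IsLaverTreeWithStem S' s := by
    refine ⟨?_, ?_, ?_, ?_⟩
    · refine Or.inl ⟨hst.laver.1, ?_⟩
      intro v hv hsp
      have := (hst.frontQ v hv).2.1.length_le
      exact absurd hsp.length_lt (by omega)
    · rintro u (⟨huS, hno⟩ | ⟨v, n, hv, hn, hpre, hmem⟩) w hw
      · refine Or.inl ⟨hst.laver.2.1 u huS w hw, ?_⟩
        intro v hv hsp
        exact hno v hv ⟨hsp.1.trans hw, by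
          intro he; subst he
          exact absurd (hsp.length_lt.trans_le hw.length_le) (lt_irrefl _)⟩
      · rcases List.prefix_or_prefix_of_prefix hw hpre with hc | hc
        · rcases prefix_snoc hc with hc' | hc'
          · refine Or.inl ⟨hst.laver.2.1 v (hst.frontQ v hv).1 w hc', ?_⟩
            intro v' hv' hsp
            have hvv' : v' <+: v := hsp.1.trans hc'
            have : v' = v := hst.anti v' hv' v hv hvv'
            subst this
            exact absurd (hsp.length_lt.trans_le hc'.length_le) (lt_irrefl _)
          · exact Or.inr ⟨v, n, hv, hn, hc' ▸ List.prefix_refl _,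
              hc' ▸ (hW1 v n hv hn).1⟩
        · exact Or.inr ⟨v, n, hv, hn, hc,
            (hW1 v n hv hn).2.1 u hmem w hw⟩
    · intro u hu
      exact hst.laver.2.2.1 u (hsubS hu)
    · rintro u hu hsu
      rcases id hu with ⟨huS, hno⟩ | ⟨v, n, hv, hn, hpre, hmem⟩
      · refine (hst.laver.2.2.2 u huS hsu).mono ?_
        intro m hm
        by_cases hcase : ∃ v, v ∈ A ∧ SPre v (u ++ [m])
        · obtain ⟨v, hv, hsp⟩ := hcase
          have hvu : v <+: u := by
            rcases prefix_snoc hsp.1 with h' | h'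
            · exact h'
            · exact absurd h' hsp.2
          have hveq : v = u := by
            by_contra hne
            exact hno v hv ⟨hvu, hne⟩
          subst hveq
          exact Or.inr ⟨v, m, hv, hm, List.prefix_refl _, (hW1 v m hv hm).1⟩
        · push_neg at hcase
          exact Or.inl ⟨hm, fun v hv => hcase v hv⟩
      · refine ((hW1 v n hv hn).2.2.2 u hmem hpre).mono ?_
        intro m hm
        exact Or.inr ⟨v, n, hv, hn, hpre.trans (List.prefix_append u [m]), hm⟩
  -- the hitting property for S'
  have hhit : ∀ r ∈ branches S', ∃ u, Lext u r ∧ (u ∈ S' ∧ s <+: u ∧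
      s.length + (k+1) ≤ u.length ∧ res S' u ∈ D) := by
    intro r hr
    have hrS : r ∈ branches S := branches_mono hsubS hr
    obtain ⟨v, hv, hlv⟩ := hst.hit r hrS
    set n := r v.length with hndef
    have hsnoc : Lext (v ++ [n]) r := lext_append_iff.mpr ⟨hlv, rfl⟩
    have hnS' : (v ++ [n]) ∈ S' := mem_of_lext hr hsnoc
    have hnS : (v ++ [n]) ∈ S := hsubS hnS'
    have hrW : r ∈ branches (W v n hv hnS) := by
      intro m
      rcases le_or_gt m (v.length + 1) with hm | hm
      · have hpm : seqTake r m <+: v ++ [n] := by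
          have := seqTake_prefix r (show m ≤ (v ++ [n]).length by simp; omega)
          rwa [hsnoc] at this
        exact (hW1 v n hv hnS).2.1 _ (hW1 v n hv hnS).1 _ hpm
      · have hin : seqTake r m ∈ S' := hr m
        have hvsp : SPre v (seqTake r m) := by
          refine ⟨?_, ?_⟩
          · have := seqTake_prefix r (show v.length ≤ m by omega)
            rwa [hlv] at this
          · intro he
            have := congrArg List.length he
            simp at this; omega
        rcases id hin with ⟨_, hno⟩ | ⟨v', n', hv', hn', hp', hm'⟩
        · exact absurd hvsp (hno v hv)
        · have hsnp : (v ++ [n]) <+: seqTake r m := by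
            have := seqTake_prefix r (show (v ++ [n]).length ≤ m by simp; omega)
            rwa [hsnoc] at this
          obtain ⟨hvv, hnn⟩ := uniq (seqTake r m) v' v n' n hv' hv hp' hsnp
          subst hvv; subst hnn
          exact hm'
    obtain ⟨u, hlu, hpu, hres⟩ := hW3 v n hv hnS r hrW
    have huW : u ∈ W v n hv hnS := mem_of_lext hrW hlu
    have huS' : u ∈ S' := Or.inr ⟨v, n, hv, hnS, hpu, huW⟩
    have hsu : s <+: u :=
      ((hst.frontQ v hv).2.1).trans ((List.prefix_append v [n]).trans hpu)
    have hlen : s.length + (k+1) ≤ u.length := by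
      have h1 := hpu.length_le
      have h2 := (hst.frontQ v hv).2.2
      simp at h1; omega
    refine ⟨u, hlu, huS', hsu, hlen, ?_⟩
    refine hDo _ (res S' u) hres ?_ ⟨u, res_laver hS' huS' hsu⟩
    rintro w ⟨hwS', hwc⟩
    refine ⟨?_, hwc⟩
    have hkey : ∀ w', w' ∈ S' → (v ++ [n]) <+: w' → w' ∈ W v n hv hnS := by
      rintro w' hw' hp
      rcases id hw' with ⟨_, hno⟩ | ⟨v', n', hv', hn', hp', hm'⟩
      · exact absurd ⟨(List.prefix_append v [n]).trans hp, by
          intro he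
          have h1 := hp.length_le
          rw [← he] at h1
          simp at h1⟩ (hno v hv)
      · obtain ⟨hvv, hnn⟩ := uniq w' v' v n' n hv' hv hp' hp
        subst hvv; subst hnn
        exact hm'
    rcases hwc with hwu | huw
    · rcases le_or_gt w.length (v.length + 1) with hl | hl
      · have hwp : w <+: v ++ [n] := by
          have h1 : (v ++ [n]) <+: u := hpu
          rcases List.prefix_or_prefix_of_prefix hwu h1 with hc | hc
          · exact hc
          · exact (hc.eq_of_length_le (by simp; omega)) ▸ List.prefix_refl _
        exact (hW1 v n hv hnS).2.1 _ (hW1 v n hv hnS).1 _ hwp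
      · have hp : (v ++ [n]) <+: w := by
          rcases List.prefix_or_prefix_of_prefix hwu hpu with hc | hc
          · exact absurd hc.length_le (by simp; omega)
          · exact hc
        exact hkey w hwS' hp
    · exact hkey w hwS' (hpu.trans huw)
  obtain ⟨A', hA'Q, hA'anti, hA'hit⟩ := extract_front _ hhit
  refine ⟨S', A', ⟨hS', hsubS.trans hst.sub, ?_, hA'anti, hA'hit⟩, hsubS, hstab, ?_⟩
  · intro v hv
    exact ⟨(hA'Q v hv).1, (hA'Q v hv).2.1, (hA'Q v hv).2.2.1⟩
  · intro r hr
    obtain ⟨u, hlu, hq⟩ := hhit r hr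
    exact ⟨u, hlu, hq.2.1, hq.2.2.2⟩

theorem fusion {T : Set Node} {s : Node} (hT : IsLaverTreeWithStem T s)
    (D : ℕ → Set (Set Node)) (hDo : ∀ j, DOpen (D j)) (hden : ∀ j, DenseBelow (D j) T) :
    ∃ S : Set Node, IsLaverTreeWithStem S s ∧ S ⊆ T ∧
      ∀ r ∈ branches S, ∀ j, ∃ u, Lext u r ∧ s <+: u ∧ res S u ∈ D j := by
  classical
  set P : ℕ → Set Node × Set Node → Prop := fun k p =>
    Stage T s k p.1 p.2 ∧
      (∀ r ∈ branches p.1, ∃ u, Lext u r ∧ s <+: u ∧ res p.1 u ∈ D k) with hPdef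
  have h0 : ∃ p, P 0 p := by
    obtain ⟨S₀, hS₀, hsub₀, hhit₀⟩ := front hT (hDo 0) (hden 0)
    obtain ⟨A₀, hQ₀, hanti₀, hfr₀⟩ := extract_front
      (fun u => u ∈ S₀ ∧ s <+: u ∧ res S₀ u ∈ D 0)
      (by
        intro r hr
        obtain ⟨u, hlu, hsu, hres⟩ := hhit₀ r hr
        exact ⟨u, hlu, mem_of_lext hr hlu, hsu, hres⟩)
    refine ⟨(S₀, A₀), ⟨⟨hS₀, hsub₀, ?_, hanti₀, hfr₀⟩, hhit₀⟩⟩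
    intro v hv
    exact ⟨(hQ₀ v hv).1, (hQ₀ v hv).2.1, by
      have := (hQ₀ v hv).2.1.length_le; omega⟩
  have hstep : ∀ k p, P k p → ∃ q : Set Node × Set Node, P (k+1) q ∧ q.1 ⊆ p.1 ∧
      (∀ u, (∀ v ∈ p.2, ¬ SPre v u) → (u ∈ q.1 ↔ u ∈ p.1)) := by
    intro k p hp
    obtain ⟨S', A', hstage, hsub, hstab, hhit⟩ := fusion_step hp.1 (hDo (k+1)) (hden (k+1))
    exact ⟨(S', A'), ⟨hstage, hhit⟩, hsub, hstab⟩
  obtain ⟨p0, hp0⟩ := h0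
  choose! step hstep1 hstep2 hstep3 using hstep
  set F : ℕ → Set Node × Set Node := fun k => Nat.rec p0 (fun k ih => step k ih) k with hFdef
  have hFsucc : ∀ k, F (k+1) = step k (F k) := fun k => rfl
  have hP : ∀ k, P k (F k) := by
    intro k
    induction k with
    | zero => exact hp0
    | succ k ih =>
      rw [hFsucc]
      exact hstep1 k (F k) ih
  have hmono : ∀ k m, k ≤ m → (F m).1 ⊆ (F k).1 := by
    intro k m hkm
    induction m with
    | zero => have : k = 0 := Nat.le_zero.mp hkm; subst this; exact subset_rfl
    | succ m ihm =>
      rcases Nat.lt_or_ge k (m+1) with h | h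
      · have h1 : (F (m+1)).1 ⊆ (F m).1 := by
          rw [hFsucc]; exact hstep2 m (F m) (hP m)
        exact h1.trans (ihm (Nat.lt_succ_iff.mp h))
      · have : k = m + 1 := le_antisymm hkm h
        subst this; exact subset_rfl
  have hstab2 : ∀ k m (u : Node), k ≤ m → u.length ≤ s.length + k →
      (u ∈ (F m).1 ↔ u ∈ (F k).1) := by
    intro k m u hkm hlen
    induction m with
    | zero => have : k = 0 := Nat.le_zero.mp hkm; subst this; rfl
    | succ m ihm =>
      rcases Nat.lt_or_ge k (m+1) with h | h
      · have hkm' : k ≤ m := Nat.lt_succ_iff.mp h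
        have h1 : (u ∈ (F (m+1)).1 ↔ u ∈ (F m).1) := by
          rw [hFsucc]
          refine hstep3 m (F m) (hP m) u ?_
          intro v hv hsp
          have := ((hP m).1.frontQ v hv).2.2
          have := hsp.length_lt
          omega
        rw [h1]
        exact ihm hkm'
      · have : k = m + 1 := le_antisymm hkm h
        subst this; rfl
  set Sinf : Set Node := ⋂ k, (F k).1 with hSinfdef
  have hmemSinf : ∀ u : Node, u ∈ Sinf ↔ ∀ k, u ∈ (F k).1 := by
    intro u; simp [hSinfdef]
  have hkey : ∀ (u : Node) (k : ℕ), u.length ≤ s.length + k → (u ∈ Sinf ↔ u ∈ (F k).1) := by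
    intro u k hlen
    rw [hmemSinf]
    constructor
    · exact fun h => h k
    · intro h m
      rcases Nat.le_or_le m k with hmk | hmk
      · exact hmono m k hmk h
      · exact (hstab2 k m u hmk hlen).mpr h
  have hSinfsub : ∀ k, Sinf ⊆ (F k).1 := fun k => Set.iInter_subset _ k
  have hLinf : IsLaverTreeWithStem Sinf s := by
    refine ⟨?_, ?_, ?_, ?_⟩
    · rw [hmemSinf]; exact fun k => (hP k).1.laver.1
    · intro u hu w hw
      rw [hmemSinf] at hu ⊢
      exact fun k => (hP k).1.laver.2.1 u (hu k) w hw
    · intro u hu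
      exact (hP 0).1.laver.2.2.1 u (hSinfsub 0 hu)
    · intro u hu hsu
      set k := u.length + 1 with hkdef
      have huk : u ∈ (F k).1 := hSinfsub k hu
      refine ((hP k).1.laver.2.2.2 u huk hsu).mono ?_
      intro m hm
      have : (u ++ [m]).length ≤ s.length + k := by simp [hkdef]
      exact (hkey (u ++ [m]) k this).mpr hm
  refine ⟨Sinf, hLinf, (hSinfsub 0).trans (hP 0).1.sub, ?_⟩
  intro r hr j
  have hrj : r ∈ branches (F j).1 := branches_mono (hSinfsub j) hr
  obtain ⟨u, hlu, hsu, hres⟩ := (hP j).2 r hrj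
  refine ⟨u, hlu, hsu, ?_⟩
  refine hDo j _ (res Sinf u) hres (res_mono (hSinfsub j) u)
    ⟨u, res_laver hLinf (mem_of_lext hr hlu) hsu⟩

/-! topology -/

theorem lext_iff {t : Node} {r : ℕ → ℕ} :
    Lext t r ↔ ∀ i, (h : i < t.length) → r i = t[i] := by
  constructor
  · intro h i hi
    have h1 : (seqTake r t.length)[i]'(by simp [hi]) = r i := by
      simp [seqTake, List.getElem_ofFn]
    rw [← h1]
    exact List.getElem_of_eq h _
  · intro h
    refine List.ext_getElem (by simp) ?_
    intro n h1 h2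
    simp only [seqTake, List.getElem_ofFn]
    exact h n h2

theorem isOpen_cyl (t : Node) : IsOpen {r : ℕ → ℕ | Lext t r} := by
  have : {r : ℕ → ℕ | Lext t r} = ⋂ i : Fin t.length, {r | r i = t[(i : ℕ)]} := by
    ext r
    simp only [Set.mem_setOf_eq, Set.mem_iInter, lext_iff]
    exact ⟨fun h i => h i i.2, fun h i hi => h ⟨i, hi⟩⟩
  rw [this]
  refine isOpen_iInter_of_finite fun i => ?_
  show IsOpen ((fun p : ℕ → ℕ => p (i : ℕ)) ⁻¹' {t[(i : ℕ)]})
  exact IsOpen.preimage (continuous_apply (i : ℕ)) (isOpen_discrete _)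

theorem isClosed_branches (T : Set Node) : IsClosed (branches T) := by
  rw [← isOpen_compl_iff]
  have : (branches T)ᶜ = ⋃ t ∈ {t : Node | t ∉ T}, {r | Lext t r} := by
    ext r
    simp only [Set.mem_compl_iff, branches, Set.mem_setOf_eq, Set.mem_iUnion]
    constructor
    · intro h
      push_neg at h
      obtain ⟨n, hn⟩ := h
      exact ⟨seqTake r n, hn, lext_seqTake r n⟩
    · rintro ⟨t, ht, hlt⟩ h
      exact ht (hlt ▸ h t.length)
  rw [this]
  exact isOpen_biUnion fun t _ => isOpen_cyl t

theorem exists_cyl_subset {B : Set (ℕ → ℕ)} (hB : IsOpen B) {r : ℕ → ℕ} (hr : r ∈ B) :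
    ∃ n : ℕ, {r' | Lext (seqTake r n) r'} ⊆ B := by
  obtain ⟨I, u, hIu, hsub⟩ := isOpen_pi_iff.mp hB r hr
  refine ⟨(I.sup id) + 1, ?_⟩
  intro r' hr'
  apply hsub
  intro i hi
  have hi' : i < I.sup id + 1 := Nat.lt_succ_of_le (Finset.le_sup (f := id) hi)
  have h1 := lext_iff.mp hr' i (by simpa using hi')
  have h2 := lext_iff.mp (lext_seqTake r (I.sup id + 1)) i (by simpa using hi')
  have h3 : r' i = r i := h1.trans h2.symm
  rw [h3]
  exact (hIu i hi).2

/-! the dichotomy -/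

theorem dichotomy {B : Set (ℕ → ℕ)} (hB : MeasurableSet B) :
    ∀ U : Set Node, IsLaverTree U → ∃ V : Set Node, IsLaverTree V ∧ V ⊆ U ∧
      (branches V ⊆ B ∨ branches V ∩ B = ∅) := by
  refine MeasurableSet.induction_on_open
    (C := fun B _ => ∀ U : Set Node, IsLaverTree U → ∃ V : Set Node, IsLaverTree V ∧ V ⊆ U ∧
      (branches V ⊆ B ∨ branches V ∩ B = ∅)) ?_ ?_ ?_ _ hB
  · intro B hB
    intro U hU
    obtain ⟨s, hUs⟩ := hU
    by_cases hex : ∃ r, r ∈ branches U ∩ B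
    · obtain ⟨r, hrU, hrB⟩ := hex
      obtain ⟨n, hn⟩ := exists_cyl_subset hB hrB
      set m := max n s.length with hmdef
      set t := seqTake r m with htdef
      have htU : t ∈ U := hrU m
      have hst : s <+: t := stem_prefix_of_long hUs htU (by simp [htdef, hmdef])
      refine ⟨res U t, ⟨t, res_laver hUs htU hst⟩, res_subset U t, Or.inl ?_⟩
      intro r' hr'
      apply hn
      have hlt : Lext t r' := (branches_res.mp hr').2
      exact Lext.of_prefix (by
        have := seqTake_prefix r (show n ≤ m by simp [hmdef])
        exact this) hlt
    · push_neg at hex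
      refine ⟨U, ⟨s, hUs⟩, subset_rfl, Or.inr ?_⟩
      ext r
      simp only [Set.mem_inter_iff, Set.mem_empty_iff_false, iff_false, not_and]
      intro h1 h2
      exact hex r ⟨h1, h2⟩
  · intro B hBm ih
    intro U hU
    obtain ⟨V, hV, hsub, hc⟩ := ih U hU
    refine ⟨V, hV, hsub, ?_⟩
    rcases hc with hc | hc
    · refine Or.inr ?_
      ext r
      simp only [Set.mem_inter_iff, Set.mem_empty_iff_false, iff_false, not_and,
        Set.mem_compl_iff]
      intro h1 h2
      exact h2 (hc h1)
    · refine Or.inl ?_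
      intro r hr
      intro hrB
      have : r ∈ branches V ∩ B := ⟨hr, hrB⟩
      rw [hc] at this
      exact this
  · intro g hdisj hm ih
    intro U hU
    obtain ⟨s, hUs⟩ := hU
    by_cases hex : ∃ i, ∃ V : Set Node, IsLaverTree V ∧ V ⊆ U ∧ branches V ⊆ g i
    · obtain ⟨i, V, hV, hsub, hB⟩ := hex
      exact ⟨V, hV, hsub, Or.inl (hB.trans (Set.subset_iUnion g i))⟩
    · push_neg at hex
      set Dj : ℕ → Set (Set Node) := fun i => {W | W ⊆ U ∧ branches W ∩ g i = ∅} with hDjdef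
      have hDo : ∀ i, DOpen (Dj i) := by
        intro i W W' hW hsub' _
        refine ⟨hsub'.trans hW.1, ?_⟩
        have : branches W' ∩ g i ⊆ branches W ∩ g i :=
          Set.inter_subset_inter_left _ (branches_mono hsub')
        rw [hW.2] at this
        exact Set.subset_empty_iff.mp this
      have hden : ∀ i, DenseBelow (Dj i) U := by
        intro i V hV hVU
        obtain ⟨V', hV', hsub', hc⟩ := ih i V hV
        rcases hc with hc | hc
        · exact absurd hc (hex i V' hV' (hsub'.trans hVU))
        · exact ⟨V', hV', hsub', hsub'.trans hVU, hc⟩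
      obtain ⟨S, hS, hsub, hhit⟩ := fusion hUs Dj hDo hden
      refine ⟨S, ⟨s, hS⟩, hsub, Or.inr ?_⟩
      ext r
      simp only [Set.mem_inter_iff, Set.mem_empty_iff_false, iff_false, not_and,
        Set.mem_iUnion]
      rintro hr ⟨i, hri⟩
      obtain ⟨u, hlu, hsu, hres⟩ := hhit r hr i
      have hrres : r ∈ branches (res S u) := branches_res_of_lext hr hlu
      have : r ∈ branches (res S u) ∩ g i := ⟨hrres, hri⟩
      rw [hres.2] at this
      exact this

end LaverCRN

open LaverCRN in
theorem laver_continuous_reading'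
    (T : Set (List ℕ)) (hT : IsLaverTree T)
    (f : (ℕ → ℕ) → (ℕ → Bool)) (hf : Measurable ((branches T).restrict f)) :
    ∃ S : Set (List ℕ), IsLaverTree S ∧ S ⊆ T ∧ ContinuousOn f (branches S) := by
  classical
  obtain ⟨s, hTs⟩ := hT
  set P : ℕ → Set (ℕ → ℕ) := fun k =>
    Subtype.val '' ((branches T).restrict f ⁻¹' {x : ℕ → Bool | x k = true}) with hPdef
  have hPm : ∀ k, MeasurableSet (P k) := by
    intro k
    refine MeasurableSet.subtype_image (isClosed_branches T).measurableSet ?_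
    have hset : MeasurableSet {x : ℕ → Bool | x k = true} := by
      have he : {x : ℕ → Bool | x k = true} = (fun x : ℕ → Bool => x k) ⁻¹' {true} := rfl
      rw [he]
      exact (measurable_pi_apply k) (measurableSet_singleton true)
    exact hf hset
  have hPmem : ∀ (k : ℕ) (r : ℕ → ℕ), r ∈ branches T → (r ∈ P k ↔ f r k = true) := by
    intro k r hr
    constructor
    · rintro ⟨⟨r', hr'⟩, hx, rfl⟩
      exact hx
    · intro h
      exact ⟨⟨r, hr⟩, h, rfl⟩
  set Dk : ℕ → Set (Set Node) := fun k =>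
    {W | W ⊆ T ∧ (branches W ⊆ P k ∨ branches W ∩ P k = ∅)} with hDkdef
  have hDo : ∀ k, DOpen (Dk k) := by
    intro k W W' hW hsub' _
    refine ⟨hsub'.trans hW.1, ?_⟩
    rcases hW.2 with hc | hc
    · exact Or.inl ((branches_mono hsub').trans hc)
    · refine Or.inr ?_
      have : branches W' ∩ P k ⊆ branches W ∩ P k :=
        Set.inter_subset_inter_left _ (branches_mono hsub')
      rw [hc] at this
      exact Set.subset_empty_iff.mp this
  have hden : ∀ k, DenseBelow (Dk k) T := by
    intro k V hV hVT
    obtain ⟨V', hV', hsub', hc⟩ := dichotomy (hPm k) V hV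
    exact ⟨V', hV', hsub', hsub'.trans hVT, hc⟩
  obtain ⟨S, hS, hsub, hhit⟩ := fusion hTs Dk hDo hden
  refine ⟨S, ⟨s, hS⟩, hsub, ?_⟩
  intro r hr
  show Filter.Tendsto f (nhdsWithin r (branches S)) (nhds (f r))
  rw [tendsto_pi_nhds]
  intro k
  obtain ⟨u, hlu, hsu, hres⟩ := hhit r hr k
  have hconst : ∀ r' ∈ branches S, Lext u r' → f r' k = f r k := by
    intro r' hr' hlu'
    have h1 : r' ∈ branches (res S u) := branches_res_of_lext hr' hlu'
    have h2 : r ∈ branches (res S u) := branches_res_of_lext hr hlu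
    have hrT : r ∈ branches T := branches_mono hsub hr
    have hr'T : r' ∈ branches T := branches_mono hsub hr'
    rcases hres.2 with hc | hc
    · have e1 : f r' k = true := (hPmem k r' hr'T).mp (hc h1)
      have e2 : f r k = true := (hPmem k r hrT).mp (hc h2)
      rw [e1, e2]
    · have e1 : f r' k = false := by
        cases hb : f r' k
        · rfl
        · exfalso
          have hm : r' ∈ branches (res S u) ∩ P k := ⟨h1, (hPmem k r' hr'T).mpr hb⟩
          rw [hc] at hm
          exact hm
      have e2 : f r k = false := by
        cases hb : f r k
        · rfl
        · exfalso
          have hm : r ∈ branches (res S u) ∩ P k := ⟨h2, (hPmem k r hrT).mpr hb⟩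
          rw [hc] at hm
          exact hm
      rw [e1, e2]
  refine Filter.Tendsto.congr' ?_ tendsto_const_nhds
  have hcyl : {r' | Lext u r'} ∈ nhdsWithin r (branches S) :=
    mem_nhdsWithin_of_mem_nhds ((isOpen_cyl u).mem_nhds hlu)
  filter_upwards [hcyl, self_mem_nhdsWithin] with r' hc1 hc2
  exact (hconst r' hc2 hc1).symm

/-- For every Laver tree `T` and every Borel function `f : [T] → 2^ω` there is a Laver
tree `S ⊆ T` such that `f` restricted to `[S]` is continuous. -/
theorem laver_continuous_reading
    (T : Set (List ℕ)) (hT : IsLaverTree T)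
    (f : (ℕ → ℕ) → (ℕ → Bool)) (hf : Measurable ((branches T).restrict f)) :
    ∃ S : Set (List ℕ), IsLaverTree S ∧ S ⊆ T ∧ ContinuousOn f (branches S) := by
  exact laver_continuous_reading' T hT f hf
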